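/- The TSA node bound is valid: given that α_{1,{1}} ≥ α_{1,{2}} ≥ ... ≥ α_{1,{n}} (singleton proportion parameters sorted in descending order) and an index set J ⊆ {1,...,n} of size j whose maximum element is max(J), for every superset K of J with |K| = k and respecting the legitimate order (every index of K\J exceeds max(J)), α_K ≤ α_J + ∑_{i=1}^{k−j} α_{1,{i+max(J)}}. -/

import Mathlib

open Finset

noncomputable def alphaS {m n : ℕ} (A : Matrix (Fin m) (Fin n) ℝ) (S : Finset (Fin n)) : ℝ :=
  sSup {r : ℝ | ∃ z : Fin n → ℝ, A.mulVec z = 0 ∧ z ≠ 0 ∧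
    r = (∑ i ∈ S, |z i|) / (∑ i, |z i|)}

lemma ratioSet_nonempty {m n : ℕ} (A : Matrix (Fin m) (Fin n) ℝ)
    (hN : ∃ z : Fin n → ℝ, A.mulVec z = 0 ∧ z ≠ 0) (S : Finset (Fin n)) :
    {r : ℝ | ∃ z : Fin n → ℝ, A.mulVec z = 0 ∧ z ≠ 0 ∧
      r = (∑ i ∈ S, |z i|) / (∑ i, |z i|)}.Nonempty := by
  obtain ⟨z, hz1, hz2⟩ := hN
  exact ⟨_, z, hz1, hz2, rfl⟩

lemma sum_abs_pos {n : ℕ} {z : Fin n → ℝ} (hz : z ≠ 0) : 0 < ∑ i, |z i| := by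
  obtain ⟨i, hi⟩ := Function.ne_iff.mp hz
  have : 0 < |z i| := abs_pos.mpr hi
  have h2 : |z i| ≤ ∑ j, |z j| :=
    Finset.single_le_sum (f := fun j => |z j|) (fun j _ => abs_nonneg _) (mem_univ i)
  linarith

lemma ratioSet_bddAbove {m n : ℕ} (A : Matrix (Fin m) (Fin n) ℝ) (S : Finset (Fin n)) :
    BddAbove {r : ℝ | ∃ z : Fin n → ℝ, A.mulVec z = 0 ∧ z ≠ 0 ∧
      r = (∑ i ∈ S, |z i|) / (∑ i, |z i|)} := by
  refine ⟨1, fun r hr => ?_⟩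
  obtain ⟨z, _, hz2, rfl⟩ := hr
  have hpos := sum_abs_pos hz2
  rw [div_le_one hpos]
  exact Finset.sum_le_sum_of_subset_of_nonneg (subset_univ S) (fun i _ _ => abs_nonneg _)

lemma smono_gap {t : ℕ} (g : Fin t → ℕ) (hg : StrictMono g) :
    ∀ d : ℕ, ∀ i j : Fin t, (j : ℕ) = (i : ℕ) + d → g i + d ≤ g j := by
  intro d
  induction d with
  | zero => intro i j h; have hij : i = j := Fin.ext (by omega); rw [hij]; omega
  | succ d ih =>
    intro i j h
    have hj' : (i : ℕ) + d < t := by omega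
    have h1 := ih i ⟨(i : ℕ) + d, hj'⟩ rfl
    have h2 : g ⟨(i : ℕ) + d, hj'⟩ < g j := hg (by simp [Fin.lt_def]; omega)
    omega

theorem stmt_10 {m n k : ℕ} (A : Matrix (Fin m) (Fin n) ℝ)
    (hN : ∃ z : Fin n → ℝ, A.mulVec z = 0 ∧ z ≠ 0)
    (hsort : ∀ i j : Fin n, i ≤ j → alphaS A {j} ≤ alphaS A {i})
    (J : Finset (Fin n)) (hJne : J.Nonempty) (hJk : J.card ≤ k)
    (hrange : (J.max' hJne : ℕ) + 1 + (k - J.card) ≤ n)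
    (K : Finset (Fin n)) (hJK : J ⊆ K) (hKk : K.card = k)
    (horder : ∀ i ∈ K \ J, J.max' hJne < i) :
    alphaS A K ≤ alphaS A J +
      ∑ i ∈ Finset.univ.filter (fun i : Fin n =>
          (J.max' hJne : ℕ) < (i : ℕ) ∧ (i : ℕ) ≤ (J.max' hJne : ℕ) + (k - J.card)),
        alphaS A {i} := by
  set M : ℕ := (J.max' hJne : ℕ) with hM
  set t : ℕ := k - J.card with ht
  set W : Finset (Fin n) := Finset.univ.filter (fun i : Fin n =>
      M < (i : ℕ) ∧ (i : ℕ) ≤ M + t) with hW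
  -- step 1: alphaS A K ≤ alphaS A J + ∑_{i ∈ K\J} alphaS A {i}
  have hcardKJ : (K \ J).card = t := by
    rw [card_sdiff_of_subset hJK, hKk]
  have step1 : alphaS A K ≤ alphaS A J + ∑ i ∈ K \ J, alphaS A {i} := by
    apply csSup_le (ratioSet_nonempty A hN K)
    rintro r ⟨z, hz1, hz2, rfl⟩
    have hpos := sum_abs_pos hz2
    have hsplit : (∑ i ∈ K, |z i|) / (∑ i, |z i|)
        = (∑ i ∈ J, |z i|) / (∑ i, |z i|) + ∑ i ∈ K \ J, |z i| / (∑ i, |z i|) := by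
      rw [← Finset.sum_div, ← add_div, add_comm, Finset.sum_sdiff hJK]
    rw [hsplit]
    have h1 : (∑ i ∈ J, |z i|) / (∑ i, |z i|) ≤ alphaS A J :=
      le_csSup (ratioSet_bddAbove A J) ⟨z, hz1, hz2, rfl⟩
    have h2 : ∀ i ∈ K \ J, |z i| / (∑ i, |z i|) ≤ alphaS A {i} := by
      intro i _
      have : |z i| = ∑ j ∈ ({i} : Finset (Fin n)), |z j| := by simp
      rw [this]
      exact le_csSup (ratioSet_bddAbove A {i}) ⟨z, hz1, hz2, rfl⟩
    have := Finset.sum_le_sum h2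
    linarith
  refine step1.trans (add_le_add le_rfl ?_)
  -- step 2: ∑_{i ∈ K\J} alphaS A {i} ≤ ∑_{i ∈ W} alphaS A {i}
  -- W is the image of fun i : Fin t => ⟨M+1+i, _⟩
  have hmem : ∀ i : Fin t, M + 1 + (i : ℕ) < n := fun i => by omega
  set w : Fin t → Fin n := fun i => ⟨M + 1 + (i : ℕ), hmem i⟩ with hw
  have hwinj : Function.Injective w := by
    intro a b hab
    apply Fin.ext
    have h2 := congrArg Fin.val hab
    simp only [hw] at h2
    omega
  have hWimg : W = Finset.image w Finset.univ := by
    ext x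
    simp only [hW, mem_filter, mem_univ, true_and, mem_image]
    constructor
    · rintro ⟨h1, h2⟩
      refine ⟨⟨(x : ℕ) - M - 1, by omega⟩, ?_⟩
      apply Fin.ext; simp [hw]; omega
    · rintro ⟨i, rfl⟩
      simp [hw]; omega
  -- K \ J as image of orderEmbOfFin
  set e : Fin t ↪o Fin n := (K \ J).orderEmbOfFin hcardKJ with he
  have hKJimg : K \ J = Finset.image e Finset.univ := by
    ext x
    simp only [mem_image, mem_univ, true_and]
    constructor
    · intro hx
      have hx' : x ∈ Set.range (e : Fin t → Fin n) := by
        rw [(K \ J).range_orderEmbOfFin hcardKJ]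
        exact hx
      obtain ⟨i, hi⟩ := hx'
      exact ⟨i, hi⟩
    · rintro ⟨i, rfl⟩
      exact (K \ J).orderEmbOfFin_mem hcardKJ i
  rw [hKJimg, hWimg, Finset.sum_image (fun a _ b _ h => e.injective h),
    Finset.sum_image (fun a _ b _ h => hwinj h)]
  apply Finset.sum_le_sum
  intro i _
  apply hsort
  -- w i ≤ e i
  have hgap := smono_gap (fun j => ((e j : Fin n) : ℕ)) (fun a b hab => by
    exact_mod_cast (OrderEmbedding.strictMono e) hab) (i : ℕ) ⟨0, i.pos⟩ i (by simp)
  have h0 : M < ((e ⟨0, i.pos⟩ : Fin n) : ℕ) := by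
    have := horder _ ((K \ J).orderEmbOfFin_mem hcardKJ ⟨0, i.pos⟩)
    exact_mod_cast this
  have hgap2 : ((e ⟨0, i.pos⟩ : Fin n) : ℕ) + (i : ℕ) ≤ ((e i : Fin n) : ℕ) := hgap
  simp only [Fin.le_def, hw]
  omega
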